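/- Let V be a finite set, E ⊆ V × V a symmetric edge set, cell volumes Vol : V → ℝ with Vol(i) > 0, face areas S : V × V → ℝ with S(i,j) = S(j,i), face normals n : V × V → ℝ^p with n(i,j) = -n(j,i), symmetric edge signals e : V × V → ℝ^k with e(i,j) = e(j,i), and a flux function F : ℝ^d × ℝ^d × ℝ^k → (p × d real matrices) that is permutation-invariant in its first two arguments, i.e., F(a,b,c) = F(b,a,c) for all a, b, c. Define the FluxGNN layer output h' : V → ℝ^d by Vol(i)·h'(i) = Vol(i)·h(i) - ∑_{j : (i,j) ∈ E} S(i,j) · (n(i,j)ᵀ F(h(i), h(j), e(i,j))), where n(i,j)ᵀ M ∈ ℝ^d denotes the vector with components ∑_{α} n(i,j)_α M_{α β}. Then the volume-weighted total is conserved: ∑_{i ∈ V} Vol(i)·h'(i) = ∑_{i ∈ V} Vol(i)·h(i). -/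
import Mathlib


/-- Sufficiency direction of Theorem 3.4: a FluxGNN layer with a flux
function that is permutation-invariant in its first two arguments conserves
the volume-weighted total of the vertex signal. -/
theorem fluxgnn_conservative
    {V : Type*} [Fintype V] [DecidableEq V] (d k p : ℕ)
    (E : Finset (V × V)) (hE : ∀ i j : V, (i, j) ∈ E → (j, i) ∈ E)
    (Vol : V → ℝ) (hVol : ∀ i, 0 < Vol i)
    (S : V × V → ℝ) (hS : ∀ i j : V, S (i, j) = S (j, i))
    (n : V × V → Fin p → ℝ) (hn : ∀ i j : V, n (i, j) = - n (j, i))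
    (e : V × V → Fin k → ℝ) (he : ∀ i j : V, e (i, j) = e (j, i))
    (F : (Fin d → ℝ) → (Fin d → ℝ) → (Fin k → ℝ) → Matrix (Fin p) (Fin d) ℝ)
    (hF : ∀ a b c, F a b c = F b a c)
    (h h' : V → Fin d → ℝ)
    (hdef : ∀ i : V, Vol i • h' i = Vol i • h i -
      ∑ j ∈ Finset.univ.filter (fun j => (i, j) ∈ E),
        S (i, j) • Matrix.vecMul (n (i, j)) (F (h i) (h j) (e (i, j)))) :
    ∑ i, Vol i • h' i = ∑ i, Vol i • h i := by
  set f : V × V → Fin d → ℝ := fun q =>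
    S q • Matrix.vecMul (n q) (F (h q.1) (h q.2) (e q)) with hf
  have hanti : ∀ i j : V, f (j, i) = - f (i, j) := by
    intro i j
    simp only [hf]
    rw [hS i j, hn i j, hF (h j) (h i), he i j, Matrix.neg_vecMul]
    simp
  have hmain : ∑ i : V, ∑ j ∈ Finset.univ.filter (fun j => (i, j) ∈ E),
      f (i, j) = 0 := by
    have hprod : (∑ q ∈ E, f q) = ∑ i : V,
        ∑ j ∈ Finset.univ.filter (fun j => (i, j) ∈ E), f (i, j) := by
      apply Finset.sum_finset_product E Finset.univ
        (fun i => Finset.univ.filter (fun j => (i, j) ∈ E))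
      intro q
      simp
    rw [← hprod]
    apply Finset.sum_involution (fun q _ => (q.2, q.1))
    · intro q hq
      have := hanti q.1 q.2
      simp only [Prod.mk.eta] at this ⊢
      rw [this]; simp
    · intro q hq hne hq2
      apply hne
      have h1 := hanti q.1 q.2
      rw [hq2, Prod.mk.eta] at h1
      have : (2 : ℝ) • f q = 0 := by
        rw [two_smul]; nth_rewrite 2 [h1]; simp
      have := smul_eq_zero.mp this
      simpa using this
    · intro q hq; exact hE q.1 q.2 hq
    · intro q hq; simp
  calc ∑ i, Vol i • h' i
      = ∑ i, (Vol i • h i -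
        ∑ j ∈ Finset.univ.filter (fun j => (i, j) ∈ E), f (i, j)) := by
        exact Finset.sum_congr rfl fun i _ => hdef i
    _ = ∑ i, Vol i • h i := by
        rw [Finset.sum_sub_distrib, hmain, sub_zero]
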